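/- Let [P,Q] be a Tamari interval (P ≤ Q in the Tamari lattice on Dyck paths of size n). If the i-th up step of P lies strictly between the j-th up step of P and its matching down step, then the i-th up step of Q lies strictly between the j-th up step of Q and its matching down step. -/

import Mathlib

/-- A Dyck word: `true` is an up step `u`, `false` is a down step `d`. -/
def IsDyck (w : List Bool) : Prop :=
  w.count true = w.count false ∧ ∀ k, (w.take k).count false ≤ (w.take k).count true

/-- Position (0-based index) of the `i`-th (1-based) up step of `w`. -/
noncomputable def upPos (w : List Bool) (i : ℕ) : ℕ :=
  sInf {j | w.getD j false = true ∧ (w.take (j + 1)).count true = i}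

/-- Position of the down step matching the up step at position `k`:
the first later down step such that the letters strictly in between form a Dyck word. -/
noncomputable def matchIdx (w : List Bool) (k : ℕ) : ℕ :=
  sInf {m | k < m ∧ w.getD m true = false ∧ IsDyck ((w.drop (k + 1)).take (m - (k + 1)))}

/-- The distance function `D_w(i)`: number of letters between the `i`-th up step and its
matching down step, plus one. -/
noncomputable def distFn (w : List Bool) (i : ℕ) : ℕ :=
  matchIdx w (upPos w i) - upPos w i

/-- One rotation step of the Tamari order on Dyck words: a factor `d · B` (with `B` a
nonempty Dyck word) is replaced by `B · d`. -/
def TamariStep (P Q : List Bool) : Prop :=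
  ∃ A B C : List Bool, IsDyck B ∧ B ≠ [] ∧
    P = A ++ false :: (B ++ C) ∧ Q = A ++ (B ++ false :: C)

/-- The Tamari order on Dyck words: reflexive-transitive closure of rotation steps. -/
def TamariLe : List Bool → List Bool → Prop := Relation.ReflTransGen TamariStep


namespace Helpers

lemma count_take_append (c : Bool) (X Y : List Bool) (k : ℕ) :
    ((X ++ Y).take k).count c = (X.take k).count c + (Y.take (k - X.length)).count c := by
  rw [List.take_append, List.count_append]

lemma count_take_of_le (c : Bool) (X : List Bool) {k : ℕ} (h : X.length ≤ k) :
    (X.take k).count c = X.count c := by rw [List.take_of_length_le h]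

lemma count_take_mono (c : Bool) (X : List Bool) {k k' : ℕ} (h : k ≤ k') :
    (X.take k).count c ≤ (X.take k').count c := by
  have : X.take k = (X.take k').take k := by rw [List.take_take, min_eq_left h]
  rw [this]
  exact (List.take_sublist _ _).count_le c

lemma count_take_single (c x : Bool) (k : ℕ) :
    (([x] : List Bool).take k).count c = if k = 0 then 0 else ([x] : List Bool).count c := by
  cases k with
  | zero => simp
  | succ k => rw [count_take_of_le c _ (by simp)]; simp

lemma getD_true_lt_length {w : List Bool} {p : ℕ} (h : w.getD p false = true) :
    p < w.length := by
  by_contra hc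
  rw [List.getD_eq_default _ _ (by omega)] at h
  exact Bool.false_ne_true h

lemma count_take_succ (c : Bool) {w : List Bool} {p : ℕ} (h : p < w.length) :
    (w.take (p+1)).count c = (w.take p).count c + if w[p] = c then 1 else 0 := by
  rw [List.take_succ, List.count_append, List.getElem?_eq_getElem h]
  simp [List.count_singleton']

lemma getD_eq_getElem' {w : List Bool} {p : ℕ} (d : Bool) (h : p < w.length) :
    w.getD p d = w[p] := List.getD_eq_getElem _ _ h

/-- Uniqueness: `upPos`-defining set has the given element as unique member. -/
lemma up_unique {w : List Bool} {p x i : ℕ}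
    (h1 : w.getD p false = true) (h2 : (w.take (p+1)).count true = i)
    (hx1 : w.getD x false = true) (hx2 : (w.take (x+1)).count true = i) : x = p := by
  rcases lt_trichotomy x p with h | h | h
  · exfalso
    have hp := getD_true_lt_length h1
    have := count_take_succ true (w := w) (p := p) hp
    rw [getD_eq_getElem' false hp] at h1
    rw [h1] at this
    simp at this
    have hm : (w.take (x+1)).count true ≤ (w.take p).count true := count_take_mono _ _ (by omega)
    omega
  · exact h
  · exfalso
    have hp := getD_true_lt_length hx1
    have := count_take_succ true (w := w) (p := x) hp
    rw [getD_eq_getElem' false hp] at hx1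
    rw [hx1] at this
    simp at this
    have hm : (w.take (p+1)).count true ≤ (w.take x).count true := count_take_mono _ _ (by omega)
    omega

lemma upPos_spec {w : List Bool} {p i : ℕ}
    (h1 : w.getD p false = true) (h2 : (w.take (p+1)).count true = i) :
    sInf {j | w.getD j false = true ∧ (w.take (j + 1)).count true = i} = p := by
  have hmem : p ∈ {j | w.getD j false = true ∧ (w.take (j + 1)).count true = i} := ⟨h1, h2⟩
  have hne : Set.Nonempty {j | w.getD j false = true ∧ (w.take (j + 1)).count true = i} := ⟨p, hmem⟩
  have := Nat.sInf_mem hne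
  exact up_unique h1 h2 this.1 this.2

lemma exists_up (w : List Bool) (j : ℕ) (hj1 : 1 ≤ j) (hjn : j ≤ w.count true) :
    ∃ p, w.getD p false = true ∧ (w.take (p+1)).count true = j := by
  induction w generalizing j with
  | nil => simp at hjn; omega
  | cons x w ih =>
    cases x with
    | true =>
      rcases Nat.eq_or_lt_of_le hj1 with h1 | h1
      · exact ⟨0, by simp, by simp [← h1]⟩
      · simp [List.count_cons] at hjn
        obtain ⟨p, hp1, hp2⟩ := ih (j-1) (by omega) (by omega)
        refine ⟨p+1, by simpa using hp1, ?_⟩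
        rw [List.take_succ_cons, List.count_cons]
        simp [hp2]; omega
    | false =>
      simp [List.count_cons] at hjn
      obtain ⟨p, hp1, hp2⟩ := ih j hj1 hjn
      refine ⟨p+1, by simpa using hp1, ?_⟩
      rw [List.take_succ_cons, List.count_cons]
      simp [hp2]

/-- First place where downs exceed ups. -/
lemma firstViol (s : List Bool) (h : s.count true < s.count false) :
    ∃ m, m < s.length ∧ s.getD m true = false ∧ IsDyck (s.take m) := by
  have hne : Set.Nonempty {k | (s.take k).count true < (s.take k).count false} :=
    ⟨s.length, by simpa [count_take_of_le] using h⟩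
  have hKmem := Nat.sInf_mem hne
  set K := sInf {k | (s.take k).count true < (s.take k).count false} with hK
  have hKm : (s.take K).count true < (s.take K).count false := hKmem
  have hK1 : 1 ≤ K := by
    rcases Nat.eq_zero_or_pos K with h0 | h0
    · exfalso; rw [h0] at hKm; simp at hKm
    · exact h0
  have hmin : ∀ k < K, (s.take k).count false ≤ (s.take k).count true := by
    intro k hk
    have := Nat.notMem_of_lt_sInf (hK ▸ hk)
    simp only [Set.mem_setOf_eq, not_lt] at this; omega
  have hlen : K - 1 < s.length := by
    by_contra hc
    have h1 : s.take (K-1) = s := List.take_of_length_le (by omega)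
    have h2 := hmin (K-1) (by omega)
    have h3 : s.take K = s := List.take_of_length_le (by omega)
    rw [h3] at hKm
    rw [h1] at h2
    omega
  have hKsucc : K = (K-1) + 1 := by omega
  have hct := count_take_succ true (w := s) (p := K-1) hlen
  have hcf := count_take_succ false (w := s) (p := K-1) hlen
  rw [hKsucc] at hKm
  have hmin' := hmin (K-1) (by omega)
  have hfalse : s[K-1] = false := by
    cases hsk : s[K-1] with
    | false => rfl
    | true => rw [hsk] at hct hcf; simp at hct hcf; omega
  rw [hfalse] at hct hcf
  simp at hct hcf
  refine ⟨K-1, hlen, by rw [getD_eq_getElem' true hlen, hfalse], ?_, ?_⟩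
  · omega
  · intro k
    rcases le_or_gt k (K-1) with hk | hk
    · have : (s.take (K-1)).take k = s.take k := by rw [List.take_take, min_eq_left hk]
      rw [this]; exact hmin k (by omega)
    · have : (s.take (K-1)).take k = s.take (K-1) := List.take_of_length_le (by
        have := (List.length_take : (s.take (K-1)).length = _); simp; omega)
      rw [this]; omega

/-- From a `Dyck` word `X ++ Y` where `Y` has at least as many ups as downs, `X` is Dyck. -/
lemma dyck_of_append_left {X Y : List Bool} (h : IsDyck (X ++ Y))
    (hY : Y.count false ≤ Y.count true) : IsDyck X := by
  obtain ⟨hc, hpre⟩ := h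
  rw [List.count_append, List.count_append] at hc
  have hXle : X.count false ≤ X.count true := by
    have := hpre X.length
    rw [count_take_append, count_take_append] at this
    simpa [count_take_of_le] using this
  constructor
  · omega
  · intro k
    rcases le_or_gt k X.length with hk | hk
    · have := hpre k
      rw [count_take_append, count_take_append] at this
      rw [Nat.sub_eq_zero_of_le hk] at this
      simpa using this
    · rw [count_take_of_le _ _ (by omega), count_take_of_le _ _ (by omega)]
      omega

lemma ctf (k : ℕ) : (([false] : List Bool).take k).count false = min k 1 := by
  cases k with
  | zero => simp
  | succ k =>
    rw [count_take_of_le _ _ (by simp)]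
    have : min (k+1) 1 = 1 := by omega
    rw [this]; simp

lemma ctt (k : ℕ) : (([false] : List Bool).take k).count true = 0 := by
  cases k with
  | zero => simp
  | succ k => rw [count_take_of_le _ _ (by simp)]; simp

lemma getD_append_lt {X Y : List Bool} {k : ℕ} (d : Bool) (h : k < X.length) :
    (X ++ Y).getD k d = X.getD k d := by
  rw [List.getD_eq_getElem?_getD, List.getElem?_append, if_pos h, ← List.getD_eq_getElem?_getD]

lemma getD_append_ge {X Y : List Bool} {k : ℕ} (d : Bool) (h : X.length ≤ k) :
    (X ++ Y).getD k d = Y.getD (k - X.length) d := by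
  rw [List.getD_eq_getElem?_getD, List.getElem?_append, if_neg (by omega),
    ← List.getD_eq_getElem?_getD]

/-- Moving a `false` over a Dyck block `B` preserves Dyckness (shift to the left). -/
lemma shift_dyck (A' B C₁ : List Bool) (hB : IsDyck B)
    (hseg : IsDyck (A' ++ (B ++ false :: C₁)))
    (hA : A'.count false < A'.count true) :
    IsDyck (A' ++ false :: (B ++ C₁)) := by
  have hassoc1 : A' ++ (B ++ false :: C₁) = A' ++ (B ++ ([false] ++ C₁)) := by simp
  have hassoc2 : A' ++ false :: (B ++ C₁) = A' ++ ([false] ++ (B ++ C₁)) := by simp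
  rw [hassoc1] at hseg
  rw [hassoc2]
  obtain ⟨hc, hpre⟩ := hseg
  simp only [List.count_append] at hc
  constructor
  · simp only [List.count_append]; simp at hc ⊢; omega
  · intro k
    have hpk := hpre k
    simp only [count_take_append, List.length_singleton, ctf, ctt] at hpk ⊢
    rcases le_or_gt k A'.length with hk | hk
    · rw [show k - A'.length = 0 from by omega] at hpk ⊢
      simp only [Nat.zero_sub, List.take_zero, List.count_nil] at hpk ⊢
      omega
    · rcases le_or_gt k (A'.length + 1 + B.length) with hk2 | hk2
      · rw [show A'.take k = A' from List.take_of_length_le (by omega),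
          show C₁.take (k - A'.length - 1 - B.length) = [] from by
            rw [show k - A'.length - 1 - B.length = 0 from by omega]; rfl]
        have hBt := hB.2 (k - A'.length - 1)
        simp only [List.count_nil]
        omega
      · rw [show A'.take k = A' from List.take_of_length_le (by omega),
          show B.take (k - A'.length - 1) = B from List.take_of_length_le (by omega),
          show k - A'.length - 1 - B.length = k - A'.length - B.length - 1 from by omega]
        rw [show A'.take k = A' from List.take_of_length_le (by omega),
          show B.take (k - A'.length) = B from List.take_of_length_le (by omega)] at hpk
        omega

/-- A Tamari step preserves Dyckness. -/
lemma step_dyck {A B C : List Bool} (hB : IsDyck B)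
    (hP : IsDyck (A ++ false :: (B ++ C))) : IsDyck (A ++ (B ++ false :: C)) := by
  have hassoc1 : A ++ false :: (B ++ C) = A ++ ([false] ++ (B ++ C)) := by simp
  have hassoc2 : A ++ (B ++ false :: C) = A ++ (B ++ ([false] ++ C)) := by simp
  rw [hassoc1] at hP
  rw [hassoc2]
  obtain ⟨hc, hpre⟩ := hP
  constructor
  · simp only [List.count_append] at hc ⊢; simp at hc ⊢; omega
  · intro k
    have hpk := hpre k
    have hA : A.count false ≤ A.count true := by
      have := hpre A.length
      simp only [count_take_append, List.length_singleton, ctf, ctt, Nat.sub_self,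
        List.take_zero, List.count_nil, Nat.zero_sub] at this
      rw [show A.take A.length = A from List.take_of_length_le le_rfl] at this
      omega
    simp only [count_take_append, List.length_singleton, ctf, ctt] at hpk ⊢
    rcases le_or_gt k A.length with hk | hk
    · rw [show k - A.length = 0 from by omega] at hpk ⊢
      simp only [Nat.zero_sub, List.take_zero, List.count_nil] at hpk ⊢
      omega
    · rcases le_or_gt k (A.length + B.length) with hk2 | hk2
      · rw [show A.take k = A from List.take_of_length_le (by omega),
          show k - A.length - B.length = 0 from by omega]
        have hBt := hB.2 (k - A.length)
        simp only [Nat.zero_sub, List.take_zero, List.count_nil]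
        omega
      · rw [show A.take k = A from List.take_of_length_le (by omega),
          show B.take (k - A.length) = B from List.take_of_length_le (by omega),
          show k - A.length - B.length - 1 = k - A.length - 1 - B.length from by omega]
        rw [show A.take k = A from List.take_of_length_le (by omega),
          show B.take (k - A.length - 1) = B from List.take_of_length_le (by omega)] at hpk
        omega

lemma step_count {A B C : List Bool} (c : Bool) :
    (A ++ (B ++ false :: C)).count c = (A ++ false :: (B ++ C)).count c := by
  simp [List.count_append, List.count_cons]
  omega

lemma take_app_of_le {X Y : List Bool} {k : ℕ} (h : k ≤ X.length) :
    (X ++ Y).take k = X.take k := by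
  rw [List.take_append, Nat.sub_eq_zero_of_le h]
  simp

lemma getD_drop' (w : List Bool) (t u : ℕ) (d : Bool) :
    (w.drop t).getD u d = w.getD (t + u) d := by
  rw [List.getD_eq_getElem?_getD, List.getD_eq_getElem?_getD, List.getElem?_drop]

lemma cons_take {x : Bool} {C : List Bool} {s : ℕ} (h : 1 ≤ s) :
    (x :: C).take s = x :: C.take (s - 1) := by
  cases s with
  | zero => omega
  | succ s => simp

lemma cons_drop {x : Bool} {C : List Bool} {s : ℕ} (h : 1 ≤ s) :
    (x :: C).drop s = C.drop (s - 1) := by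
  cases s with
  | zero => omega
  | succ s => simp

-- getD region lemmas for P = A ++ false :: (B ++ C)
lemma getP_lt {A B C : List Bool} {x : ℕ} (d : Bool) (h : x < A.length) :
    (A ++ false :: (B ++ C)).getD x d = A.getD x d := getD_append_lt d h

lemma getP_at {A B C : List Bool} (d : Bool) :
    (A ++ false :: (B ++ C)).getD A.length d = false := by
  rw [getD_append_ge d le_rfl, Nat.sub_self]
  rfl

lemma getP_mid {A B C : List Bool} {x : ℕ} (d : Bool) (h1 : A.length < x)
    (h2 : x ≤ A.length + B.length) :
    (A ++ false :: (B ++ C)).getD x d = B.getD (x - A.length - 1) d := by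
  rw [getD_append_ge d (by omega), show x - A.length = (x - A.length - 1) + 1 from by omega,
    List.getD_cons_succ, getD_append_lt d (by omega)]
  simp

lemma getP_hi {A B C : List Bool} {x : ℕ} (d : Bool) (h : A.length + B.length < x) :
    (A ++ false :: (B ++ C)).getD x d = C.getD (x - A.length - B.length - 1) d := by
  rw [getD_append_ge d (by omega), show x - A.length = (x - A.length - 1) + 1 from by omega,
    List.getD_cons_succ, getD_append_ge d (by omega)]
  rw [show x - A.length - 1 + 1 - B.length - 1 = x - A.length - B.length - 1 from by omega,
    show x - A.length - 1 - B.length = x - A.length - B.length - 1 from by omega]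

-- getD region lemmas for Q = A ++ (B ++ false :: C)
lemma getQ_lt {A B C : List Bool} {x : ℕ} (d : Bool) (h : x < A.length) :
    (A ++ (B ++ false :: C)).getD x d = A.getD x d := getD_append_lt d h

lemma getQ_mid {A B C : List Bool} {x : ℕ} (d : Bool) (h1 : A.length ≤ x)
    (h2 : x < A.length + B.length) :
    (A ++ (B ++ false :: C)).getD x d = B.getD (x - A.length) d := by
  rw [getD_append_ge d h1, getD_append_lt d (by omega)]

lemma getQ_at {A B C : List Bool} (d : Bool) :
    (A ++ (B ++ false :: C)).getD (A.length + B.length) d = false := by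
  rw [getD_append_ge d (by omega), getD_append_ge d (by omega)]
  simp

lemma getQ_hi {A B C : List Bool} {x : ℕ} (d : Bool) (h : A.length + B.length < x) :
    (A ++ (B ++ false :: C)).getD x d = C.getD (x - A.length - B.length - 1) d := by
  rw [getD_append_ge d (by omega), getD_append_ge d (by omega),
    show x - A.length - B.length = (x - A.length - B.length - 1) + 1 from by omega,
    List.getD_cons_succ]
  rw [show x - A.length - B.length - 1 + 1 - 1 = x - A.length - B.length - 1 from by omega]

-- count of take translations
lemma cntP (c : Bool) (A B C : List Bool) (k : ℕ) :
    ((A ++ false :: (B ++ C)).take k).count c =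
      (A.take k).count c + ((([false] : List Bool).take (k - A.length)).count c +
        ((B.take (k - A.length - 1)).count c + (C.take (k - A.length - 1 - B.length)).count c)) := by
  rw [show A ++ false :: (B ++ C) = A ++ ([false] ++ (B ++ C)) from by simp]
  simp only [count_take_append, List.length_singleton]

lemma cntQ (c : Bool) (A B C : List Bool) (k : ℕ) :
    ((A ++ (B ++ false :: C)).take k).count c =
      (A.take k).count c + ((B.take (k - A.length)).count c +
        ((([false] : List Bool).take (k - A.length - B.length)).count c +
          (C.take (k - A.length - B.length - 1)).count c)) := by
  rw [show A ++ (B ++ false :: C) = A ++ (B ++ ([false] ++ C)) from by simp]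
  simp only [count_take_append, List.length_singleton]

lemma trans_cnt_low {A B C : List Bool} {k : ℕ} (c : Bool) (h : k ≤ A.length) :
    ((A ++ (B ++ false :: C)).take k).count c = ((A ++ false :: (B ++ C)).take k).count c := by
  rw [cntP, cntQ, Nat.sub_eq_zero_of_le h]
  simp

lemma trans_cnt_mid {A B C : List Bool} {p : ℕ} (h1 : A.length < p)
    (h2 : p ≤ A.length + B.length) :
    ((A ++ (B ++ false :: C)).take p).count true
      = ((A ++ false :: (B ++ C)).take (p + 1)).count true := by
  rw [cntP, cntQ, ctt, ctt,
    show A.take p = A from List.take_of_length_le (by omega),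
    show A.take (p+1) = A from List.take_of_length_le (by omega),
    show p + 1 - A.length - 1 = p - A.length from by omega,
    show p - A.length - B.length = 0 from by omega]
  simp

lemma trans_cnt_hi {A B C : List Bool} {p : ℕ} (c : Bool) (h : A.length + B.length < p) :
    ((A ++ (B ++ false :: C)).take (p + 1)).count c
      = ((A ++ false :: (B ++ C)).take (p + 1)).count c := by
  rw [cntP, cntQ,
    show B.take (p + 1 - A.length) = B from List.take_of_length_le (by omega),
    show B.take (p + 1 - A.length - 1) = B from List.take_of_length_le (by omega),
    show ([false] : List Bool).take (p + 1 - A.length) = [false] from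
      List.take_of_length_le (by simp; omega),
    show ([false] : List Bool).take (p + 1 - A.length - B.length) = [false] from
      List.take_of_length_le (by simp; omega),
    show p + 1 - A.length - B.length - 1 = p - A.length - B.length from by omega,
    show p + 1 - A.length - 1 - B.length = p - A.length - B.length from by omega]
  omega

-- drop region lemmas
lemma dropP_low {A B C : List Bool} {k : ℕ} (h : k ≤ A.length) :
    (A ++ false :: (B ++ C)).drop k = A.drop k ++ false :: (B ++ C) := by
  rw [List.drop_append, Nat.sub_eq_zero_of_le h]
  rfl

lemma dropP_mid {A B C : List Bool} {k : ℕ} (h1 : A.length < k)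
    (h2 : k ≤ A.length + 1 + B.length) :
    (A ++ false :: (B ++ C)).drop k = B.drop (k - A.length - 1) ++ C := by
  rw [List.drop_append, List.drop_eq_nil_of_le (by omega), List.nil_append,
    show k - A.length = (k - A.length - 1) + 1 from by omega, List.drop_succ_cons,
    List.drop_append,
    show k - A.length - 1 - B.length = 0 from by omega, List.drop_zero]
  simp

lemma dropP_hi {A B C : List Bool} {k : ℕ} (h : A.length + 1 + B.length ≤ k) :
    (A ++ false :: (B ++ C)).drop k = C.drop (k - A.length - 1 - B.length) := by
  rw [List.drop_append, List.drop_eq_nil_of_le (by omega), List.nil_append,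
    show k - A.length = (k - A.length - 1) + 1 from by omega, List.drop_succ_cons,
    List.drop_append, List.drop_eq_nil_of_le (as := B) (by omega), List.nil_append]
  simp

lemma dropQ_low {A B C : List Bool} {k : ℕ} (h : k ≤ A.length) :
    (A ++ (B ++ false :: C)).drop k = A.drop k ++ (B ++ false :: C) := by
  rw [List.drop_append, Nat.sub_eq_zero_of_le h]
  rfl

lemma dropQ_mid {A B C : List Bool} {k : ℕ} (h1 : A.length ≤ k)
    (h2 : k ≤ A.length + B.length) :
    (A ++ (B ++ false :: C)).drop k = B.drop (k - A.length) ++ false :: C := by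
  rw [List.drop_append, List.drop_eq_nil_of_le (by omega), List.nil_append,
    List.drop_append,
    show k - A.length - B.length = 0 from by omega, List.drop_zero]

lemma dropQ_hi {A B C : List Bool} {k : ℕ} (h : A.length + B.length + 1 ≤ k) :
    (A ++ (B ++ false :: C)).drop k = C.drop (k - A.length - B.length - 1) := by
  rw [List.drop_append, List.drop_eq_nil_of_le (by omega), List.nil_append,
    List.drop_append, List.drop_eq_nil_of_le (as := B) (by omega), List.nil_append,
    show k - A.length - B.length = (k - A.length - B.length - 1) + 1 from by omega,
    List.drop_succ_cons]
  rw [show k - A.length - B.length - 1 + 1 - 1 = k - A.length - B.length - 1 from by omega]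

lemma upPos_eq {w : List Bool} {p i : ℕ}
    (h1 : w.getD p false = true) (h2 : (w.take (p+1)).count true = i) :
    upPos w i = p := by
  unfold upPos
  exact upPos_spec h1 h2

lemma match_exists {w : List Bool} {p : ℕ} (hw : IsDyck w) (h1 : w.getD p false = true) :
    ∃ m, p < m ∧ m < w.length ∧ w.getD m true = false ∧
      IsDyck ((w.drop (p+1)).take (m - (p+1))) := by
  have hlen := getD_true_lt_length h1
  have hel : w[p] = true := by rw [← getD_eq_getElem' false hlen]; exact h1
  have hct := count_take_succ true hlen
  have hcf := count_take_succ false hlen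
  rw [hel] at hct hcf
  simp at hct hcf
  have hpre := hw.2 p
  have hc1 : (w.take (p+1)).count true + (w.drop (p+1)).count true = w.count true := by
    rw [← List.count_append, List.take_append_drop]
  have hc0 : (w.take (p+1)).count false + (w.drop (p+1)).count false = w.count false := by
    rw [← List.count_append, List.take_append_drop]
  have htot := hw.1
  have hsur : (w.drop (p+1)).count true < (w.drop (p+1)).count false := by omega
  obtain ⟨m₀, hm₀l, hm₀g, hm₀d⟩ := firstViol _ hsur
  rw [List.length_drop] at hm₀l
  refine ⟨p + 1 + m₀, by omega, by omega, ?_, ?_⟩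
  · rw [← getD_drop' w (p+1) m₀ true]
    exact hm₀g
  · rw [show p + 1 + m₀ - (p+1) = m₀ from by omega]
    exact hm₀d

lemma step_nest {P Q : List Bool} (hstep : TamariStep P Q) (hP : IsDyck P)
    {i j : ℕ} (hj1 : 1 ≤ j) (hjn : j ≤ P.count true) (hi1 : 1 ≤ i) (hin : i ≤ P.count true)
    (hbtw1 : upPos P j < upPos P i) (hbtw2 : upPos P i < matchIdx P (upPos P j)) :
    upPos Q j < upPos Q i ∧ upPos Q i < matchIdx Q (upPos Q j) := by
  obtain ⟨A, B, C, hB, hBne, hPe, hQe⟩ := hstep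
  subst hPe; subst hQe
  have hb1 : 1 ≤ B.length := List.length_pos_iff.mpr hBne
  have hQd : IsDyck (A ++ (B ++ false :: C)) := step_dyck hB hP
  obtain ⟨p, hp1, hp2⟩ := exists_up _ j hj1 hjn
  obtain ⟨q, hq1, hq2⟩ := exists_up _ i hi1 hin
  have hupj : upPos (A ++ false :: (B ++ C)) j = p := upPos_eq hp1 hp2
  have hupi : upPos (A ++ false :: (B ++ C)) i = q := upPos_eq hq1 hq2
  rw [hupj, hupi] at hbtw1 hbtw2
  unfold matchIdx at hbtw2
  have hPmatch : ∀ m, p < m → (A ++ false :: (B ++ C)).getD m true = false →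
      IsDyck (((A ++ false :: (B ++ C)).drop (p+1)).take (m - (p+1))) → q < m := by
    intro m h1 h2 h3
    exact lt_of_lt_of_le hbtw2 (Nat.sInf_le ⟨h1, h2, h3⟩)
  have hpnea : p ≠ A.length := by
    intro h
    rw [h, getP_at] at hp1
    simp at hp1
  have hqnea : q ≠ A.length := by
    intro h
    rw [h, getP_at] at hq1
    simp at hq1
  have hfinish : ∀ p' q', upPos (A ++ (B ++ false :: C)) j = p' →
      upPos (A ++ (B ++ false :: C)) i = q' →
      (A ++ (B ++ false :: C)).getD p' false = true → p' < q' →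
      (∀ m', p' < m' → (A ++ (B ++ false :: C)).getD m' true = false →
        IsDyck (((A ++ (B ++ false :: C)).drop (p'+1)).take (m' - (p'+1))) → q' < m') →
      upPos (A ++ (B ++ false :: C)) j < upPos (A ++ (B ++ false :: C)) i ∧
        upPos (A ++ (B ++ false :: C)) i
          < matchIdx (A ++ (B ++ false :: C)) (upPos (A ++ (B ++ false :: C)) j) := by
    intro p' q' e1 e2 hQT hlt hall
    rw [e1, e2]
    refine ⟨hlt, ?_⟩
    unfold matchIdx
    obtain ⟨m, hm1, hm2, hm3, hm4⟩ := match_exists hQd hQT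
    have hne : Set.Nonempty {m | p' < m ∧ (A ++ (B ++ false :: C)).getD m true = false ∧
        IsDyck (((A ++ (B ++ false :: C)).drop (p'+1)).take (m - (p'+1)))} := ⟨m, hm1, hm3, hm4⟩
    have hmem := Nat.sInf_mem hne
    exact hall _ hmem.1 hmem.2.1 hmem.2.2
  rcases Nat.lt_or_ge p A.length with hplow | hpge
  · -- p in A
    have e1 : upPos (A ++ (B ++ false :: C)) j = p := by
      refine upPos_eq ?_ ?_
      · rw [getQ_lt false hplow]
        rw [getP_lt false hplow] at hp1
        exact hp1
      · rw [trans_cnt_low true (by omega : p + 1 ≤ A.length)]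
        exact hp2
    have hall : ∀ m', p < m' → (A ++ (B ++ false :: C)).getD m' true = false →
        IsDyck (((A ++ (B ++ false :: C)).drop (p+1)).take (m' - (p+1))) → q < m' := by
      intro m' h1 h2 h3
      by_contra hcon
      push_neg at hcon
      rw [dropQ_low (by omega)] at h3
      rcases Nat.lt_or_ge m' A.length with hm'low | hm'ge
      · -- m' in A : matching element m' for P
        have := hPmatch m' h1 (by
            rw [getP_lt true hm'low]
            rw [getQ_lt true hm'low] at h2
            exact h2) (by
          rw [dropP_low (by omega), take_app_of_le (by rw [List.length_drop]; omega)]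
          rw [take_app_of_le (by rw [List.length_drop]; omega)] at h3
          exact h3)
        omega
      · -- m' ≥ A.length: extract Dyckness of A' and use m = A.length
        have hA' : IsDyck (A.drop (p+1)) := by
          rw [List.take_append, List.length_drop,
            List.take_of_length_le (by rw [List.length_drop]; omega),
            show m' - (p+1) - (A.length - (p+1)) = m' - A.length from by omega] at h3
          rcases le_or_gt m' (A.length + B.length) with hm'2 | hm'2
          · rw [take_app_of_le (by omega)] at h3
            exact dyck_of_append_left h3 (hB.2 (m' - A.length))
          · rw [List.take_append,
              List.take_of_length_le (by omega : B.length ≤ m' - A.length),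
              cons_take (by omega)] at h3
            rcases Nat.lt_or_ge ((A.drop (p+1)).count false) ((A.drop (p+1)).count true)
              with hlt | hge
            · -- here we can even match m' itself; but A' Dyck fails; use shift_dyck path
              exfalso
              have hsh := shift_dyck _ _ _ hB h3 hlt
              have := hPmatch m' h1 (by
                  rw [getP_hi true (by omega)]
                  rw [getQ_hi true (by omega)] at h2
                  exact h2) (by
                rw [dropP_low (by omega), List.take_append, List.length_drop,
                  List.take_of_length_le (by rw [List.length_drop]; omega),
                  show m' - (p+1) - (A.length - (p+1)) = m' - A.length from by omega,
                  cons_take (by omega), List.take_append,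
                  List.take_of_length_le (by omega : B.length ≤ m' - A.length - 1),
                  show m' - A.length - 1 - B.length = m' - A.length - B.length - 1 from by omega]
                exact hsh)
              omega
            · have hcnt := h3.1
              simp only [List.count_append, List.count_cons] at hcnt
              refine dyck_of_append_left h3 ?_
              simp only [List.count_append, List.count_cons]
              simp at hcnt ⊢
              omega
        have := hPmatch A.length hplow (getP_at true) (by
          rw [dropP_low (by omega),
            take_app_of_le (by have := (List.length_drop : (A.drop (p+1)).length = _); omega),
            List.take_of_length_le (by have := (List.length_drop : (A.drop (p+1)).length = _); omega)]
          exact hA')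
        omega
    -- find q' by region of q
    have hq' : ∃ q', upPos (A ++ (B ++ false :: C)) i = q' ∧ q' ≤ q ∧ p < q' := by
      rcases Nat.lt_or_ge q A.length with hqlow | hqge
      · exact ⟨q, upPos_eq (by
            rw [getQ_lt false hqlow]
            rw [getP_lt false hqlow] at hq1
            exact hq1) (by
            rw [trans_cnt_low true (by omega : q + 1 ≤ A.length)]
            exact hq2), le_rfl, hbtw1⟩
      · rcases le_or_gt q (A.length + B.length) with hq2' | hq2'
        · refine ⟨q - 1, upPos_eq ?_ ?_, by omega, by omega⟩
          · rw [getQ_mid false (by omega) (by omega),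
              show q - 1 - A.length = q - A.length - 1 from by omega]
            rw [getP_mid false (by omega) (by omega)] at hq1
            exact hq1
          · rw [show q - 1 + 1 = q from by omega, trans_cnt_mid (by omega) hq2']
            exact hq2
        · refine ⟨q, upPos_eq ?_ ?_, le_rfl, hbtw1⟩
          · rw [getQ_hi false (by omega)]
            rw [getP_hi false (by omega)] at hq1
            exact hq1
          · rw [trans_cnt_hi true (by omega)]
            exact hq2
    obtain ⟨q', e2, hq'le, hq'gt⟩ := hq'
    refine hfinish p q' e1 e2 (by
        rw [getQ_lt false hplow]
        rw [getP_lt false hplow] at hp1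
        exact hp1) hq'gt ?_
    intro m' h1 h2 h3
    exact lt_of_le_of_lt hq'le (hall m' h1 h2 h3)
  · -- p ≥ A.length, and p ≠ A.length
    have hpgt : A.length < p := by omega
    rcases le_or_gt p (A.length + B.length) with hpmid | hphi
    · -- p in B
      have hpB : B.getD (p - A.length - 1) false = true := by
        rw [getP_mid false hpgt hpmid] at hp1
        exact hp1
      obtain ⟨mB, hmB1, hmB2, hmB3, hmB4⟩ := match_exists hB hpB
      -- P-matching element a+1+mB ≤ a+b forces q to lie in B
      have hqB : q < A.length + 1 + mB := by
        refine hPmatch (A.length + 1 + mB) (by omega) ?_ ?_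
        · rw [getP_mid true (by omega) (by omega),
            show A.length + 1 + mB - A.length - 1 = mB from by omega]
          exact hmB3
        · rw [dropP_mid (by omega) (by omega),
            show p + 1 - A.length - 1 = (p - A.length - 1) + 1 from by omega,
            show A.length + 1 + mB - (p + 1) = mB - (p - A.length - 1 + 1) from by omega,
            take_app_of_le (by rw [List.length_drop]; omega)]
          exact hmB4
      have hqmid : q ≤ A.length + B.length - 1 := by omega
      have hqgt : A.length < q := by omega
      have e1 : upPos (A ++ (B ++ false :: C)) j = p - 1 := by
        refine upPos_eq ?_ ?_
        · rw [getQ_mid false (by omega) (by omega),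
            show p - 1 - A.length = p - A.length - 1 from by omega]
          exact hpB
        · rw [show p - 1 + 1 = p from by omega, trans_cnt_mid hpgt hpmid]
          exact hp2
      have e2 : upPos (A ++ (B ++ false :: C)) i = q - 1 := by
        refine upPos_eq ?_ ?_
        · rw [getQ_mid false (by omega) (by omega),
            show q - 1 - A.length = q - A.length - 1 from by omega]
          rw [getP_mid false (by omega) (by omega)] at hq1
          exact hq1
        · rw [show q - 1 + 1 = q from by omega, trans_cnt_mid (by omega) (by omega)]
          exact hq2
      refine hfinish (p-1) (q-1) e1 e2 (by
          rw [getQ_mid false (by omega) (by omega),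
            show p - 1 - A.length = p - A.length - 1 from by omega]
          exact hpB) (by omega) ?_
      intro m' h1 h2 h3
      by_contra hcon
      push_neg at hcon
      -- m' ≤ q - 1 ≤ a + b - 2, p ≤ m'
      have hm'lo : p ≤ m' := by omega
      have hm'hi : m' ≤ A.length + B.length - 2 := by omega
      have := hPmatch (m' + 1) (by omega) (by
          rw [getP_mid true (by omega) (by omega),
            show m' + 1 - A.length - 1 = m' - A.length from by omega]
          rw [getQ_mid true (by omega) (by omega)] at h2
          exact h2) (by
        rw [dropP_mid (by omega) (by omega),
          show m' + 1 - (p + 1) = m' - p from by omega,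
          take_app_of_le (by rw [List.length_drop]; omega)]
        rw [show p - 1 + 1 = p from by omega, dropQ_mid (by omega) (by omega),
          show m' - p = m' - p from rfl,
          take_app_of_le (by rw [List.length_drop]; omega)] at h3
        rw [show p + 1 - A.length - 1 = p - A.length from by omega]
        exact h3)
      omega
    · -- p after the block
      have e1 : upPos (A ++ (B ++ false :: C)) j = p := by
        refine upPos_eq ?_ ?_
        · rw [getQ_hi false (by omega)]
          rw [getP_hi false (by omega)] at hp1
          exact hp1
        · rw [trans_cnt_hi true (by omega)]
          exact hp2
      have e2 : upPos (A ++ (B ++ false :: C)) i = q := by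
        refine upPos_eq ?_ ?_
        · rw [getQ_hi false (by omega)]
          rw [getP_hi false (by omega)] at hq1
          exact hq1
        · rw [trans_cnt_hi true (by omega)]
          exact hq2
      refine hfinish p q e1 e2 (by
          rw [getQ_hi false (by omega)]
          rw [getP_hi false (by omega)] at hp1
          exact hp1) hbtw1 ?_
      intro m' h1 h2 h3
      by_contra hcon
      push_neg at hcon
      have := hPmatch m' h1 (by
          rw [getP_hi true (by omega)]
          rw [getQ_hi true (by omega)] at h2
          exact h2) (by
        rw [dropP_hi (by omega),
          show p + 1 - A.length - 1 - B.length = p - A.length - B.length from by omega]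
        rw [dropQ_hi (by omega),
          show p + 1 - A.length - B.length - 1 = p - A.length - B.length from by omega] at h3
        exact h3)
      omega

lemma step_dyck' {P Q : List Bool} (h : TamariStep P Q) (hP : IsDyck P) : IsDyck Q := by
  obtain ⟨A, B, C, hB, hBne, hPe, hQe⟩ := h
  subst hPe; subst hQe
  exact step_dyck hB hP

lemma step_count' {P Q : List Bool} (h : TamariStep P Q) :
    Q.count true = P.count true := by
  obtain ⟨A, B, C, hB, hBne, hPe, hQe⟩ := h
  subst hPe; subst hQe
  exact step_count true

lemma le_dyck_count {P R : List Bool} (h : TamariLe P R) (hP : IsDyck P) :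
    IsDyck R ∧ R.count true = P.count true := by
  induction h with
  | refl => exact ⟨hP, rfl⟩
  | tail h1 h2 ih => exact ⟨step_dyck' h2 ih.1, by rw [step_count' h2, ih.2]⟩

end Helpers


/-- For a Tamari interval `[P, Q]`: if the `i`-th up step of `P` lies strictly between the
`j`-th up step of `P` and its matching down step, the same holds in `Q`. -/
theorem tamari_interval_nesting (n : ℕ) (P Q : List Bool)
    (hP : IsDyck P) (hQ : IsDyck Q)
    (hPn : P.count true = n) (hQn : Q.count true = n)
    (hle : TamariLe P Q) (i j : ℕ)
    (hi1 : 1 ≤ i) (hin : i ≤ n) (hj1 : 1 ≤ j) (hjn : j ≤ n)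
    (hbtw : upPos P j < upPos P i ∧ upPos P i < matchIdx P (upPos P j)) :
    upPos Q j < upPos Q i ∧ upPos Q i < matchIdx Q (upPos Q j) := by
  clear hQ hQn
  subst hPn
  induction hle with
  | refl => exact hbtw
  | tail h1 h2 ih =>
    have hR := Helpers.le_dyck_count h1 hP
    exact Helpers.step_nest h2 hR.1 hj1 (by rw [hR.2]; exact hjn) hi1
      (by rw [hR.2]; exact hin) ih.1 ih.2
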